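/- Let H be a real Hilbert space and A ⊆ H × H a relation. Then SRG(A⁻¹) = { z⁻¹ : z ∈ SRG(A) }, where A⁻¹ := {(y, u) : (u, y) ∈ A}, the inverse of a nonzero complex number is the usual one, 0⁻¹ := ∞ and ∞⁻¹ := 0. -/

import Mathlib

/-!
**Statement 4** (SRG inversion rule).  For a relation `A ⊆ H × H` on a real Hilbert
space, `SRG(A⁻¹) = { z⁻¹ : z ∈ SRG(A) }` in the extended complex plane `ℂ ∪ {∞}`,
where `0⁻¹ = ∞` and `∞⁻¹ = 0`.
-/

open InnerProductGeometry OnePoint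

variable {H : Type*} [NormedAddCommGroup H] [InnerProductSpace ℝ H]

/-- The finite part of the Scaled Relative Graph of a relation `R ⊆ H × H`
(contributions from pairs of inputs `u₁ ≠ u₂`). -/
noncomputable def srg (R : Set (H × H)) : Set ℂ :=
  {w | ∃ u₁ y₁ u₂ y₂, (u₁, y₁) ∈ R ∧ (u₂, y₂) ∈ R ∧ u₁ ≠ u₂ ∧
    (w = (‖y₁ - y₂‖ / ‖u₁ - u₂‖ : ℝ) *
        Complex.exp (Complex.I * (angle (u₁ - u₂) (y₁ - y₂) : ℝ)) ∨
     w = (‖y₁ - y₂‖ / ‖u₁ - u₂‖ : ℝ) *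
        Complex.exp (-(Complex.I * (angle (u₁ - u₂) (y₁ - y₂) : ℝ))))}

/-- The Scaled Relative Graph of a relation as a subset of the extended complex plane:
the finite part, together with `∞` whenever the relation is multivalued at some input. -/
noncomputable def srgE (R : Set (H × H)) : Set (OnePoint ℂ) :=
  (fun z : ℂ => (z : OnePoint ℂ)) '' srg R ∪
    {w | w = (∞ : OnePoint ℂ) ∧ ∃ u y₁ y₂, (u, y₁) ∈ R ∧ (u, y₂) ∈ R ∧ y₁ ≠ y₂}

/-- Relational inverse: `R⁻¹ = {(y, u) : (u, y) ∈ R}`. -/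
def relInv (R : Set (H × H)) : Set (H × H) := {p | (p.2, p.1) ∈ R}

/-- Inversion on the extended complex plane: `z⁻¹` for `z ≠ 0`, `0⁻¹ = ∞`, `∞⁻¹ = 0`. -/
noncomputable def cinv : OnePoint ℂ → OnePoint ℂ :=
  OnePoint.rec ((0 : ℂ) : OnePoint ℂ)
    (fun z => if z = 0 then (∞ : OnePoint ℂ) else ((z⁻¹ : ℂ) : OnePoint ℂ))

lemma cinv_coe (z : ℂ) :
    cinv (z : OnePoint ℂ) = if z = 0 then (∞ : OnePoint ℂ) else ((z⁻¹ : ℂ) : OnePoint ℂ) := rfl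

lemma cinv_infty : cinv (∞ : OnePoint ℂ) = ((0 : ℂ) : OnePoint ℂ) := rfl

lemma cinv_cinv : Function.Involutive cinv := by
  intro w
  induction w using OnePoint.rec with
  | infty => simp [cinv_infty, cinv_coe]
  | coe z =>
    by_cases hz : z = 0
    · simp [hz, cinv_coe, cinv_infty]
    · simp [cinv_coe, hz, inv_eq_zero]

lemma key1 (a b θ : ℝ) :
    ((↑(a / b) * Complex.exp (Complex.I * θ)))⁻¹ = ↑(b / a) * Complex.exp (-(Complex.I * θ)) := by
  rw [mul_inv, ← Complex.exp_neg, ← Complex.ofReal_inv, inv_div]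

lemma key2 (a b θ : ℝ) :
    ((↑(a / b) * Complex.exp (-(Complex.I * θ))))⁻¹ = ↑(b / a) * Complex.exp (Complex.I * θ) := by
  rw [mul_inv, ← Complex.exp_neg, neg_neg, ← Complex.ofReal_inv, inv_div]

lemma cinv_srgE_subset (R : Set (H × H)) : cinv '' srgE R ⊆ srgE (relInv R) := by
  rintro _ ⟨w, hw, rfl⟩
  rcases hw with ⟨z, hz, rfl⟩ | ⟨rfl, u, y₁, y₂, h1, h2, hne⟩
  · obtain ⟨u₁, y₁, u₂, y₂, h1, h2, hu, hz⟩ := hz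
    by_cases hy : y₁ = y₂
    · subst hy
      have hz0 : z = 0 := by rcases hz with rfl | rfl <;> simp
      right
      exact ⟨by simp [hz0, cinv_coe], y₁, u₁, u₂, h1, h2, hu⟩
    · have hzne : z ≠ 0 := by
        have hyn : ‖y₁ - y₂‖ ≠ 0 := by simpa [sub_eq_zero] using hy
        have hun : ‖u₁ - u₂‖ ≠ 0 := by simpa [sub_eq_zero] using hu
        rcases hz with rfl | rfl <;>
          simp [div_eq_zero_iff, hyn, hun, Complex.exp_ne_zero]
      left
      refine ⟨z⁻¹, ⟨y₁, u₁, y₂, u₂, h1, h2, hy, ?_⟩, by simp [cinv_coe, hzne]⟩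
      rcases hz with rfl | rfl
      · right; rw [key1, angle_comm]
      · left; rw [key2, angle_comm]
  · left
    refine ⟨0, ⟨y₁, u, y₂, u, h1, h2, hne, Or.inl (by simp)⟩, by simp [cinv_infty]⟩

theorem srg_relInv (A : Set (H × H)) :
    srgE (relInv A) = cinv '' srgE A := by
  refine Set.Subset.antisymm ?_ (cinv_srgE_subset A)
  have h : cinv '' srgE (relInv A) ⊆ srgE A := by
    have h0 := cinv_srgE_subset (relInv A)
    rwa [show relInv (relInv A) = A from rfl] at h0
  have h2 := Set.image_mono (f := cinv) h
  rwa [Set.image_image, show (fun x => cinv (cinv x)) = id from funext cinv_cinv,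
    Set.image_id] at h2
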